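/- For all z ∈ ℂ \ (-∞,-1], the function f(z) = −log(1+z)/z (with f(0) = −1) satisfies f(z) = −π/4 + ∫_{-∞}^{-1} (1/(t−z) − t/(t²+1)) · (1/(−t)) dt, and f is a Nevanlinna–Pick function on the upper half-plane. -/

import Mathlib

open MeasureTheory Set Complex

namespace NegLogNP

noncomputable def g (z : ℂ) (t : ℝ) : ℂ :=
  (((t : ℂ) - z)⁻¹ - (t : ℂ) / ((t : ℂ) ^ 2 + 1)) * (-(t : ℂ))⁻¹

noncomputable def h (z : ℂ) (s : ℝ) : ℂ :=
  ((-(s : ℂ) - z)⁻¹ + (s : ℂ) / ((s : ℂ) ^ 2 + 1)) * ((s : ℂ))⁻¹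

lemma g_neg (z : ℂ) (s : ℝ) : g z (-s) = h z s := by
  unfold g h
  push_cast
  ring

lemma sq_add_one_ne (s : ℝ) : ((s : ℂ) ^ 2 + 1) ≠ 0 := by
  have : ((s : ℂ) ^ 2 + 1) = ((s ^ 2 + 1 : ℝ) : ℂ) := by push_cast; ring
  rw [this, Complex.ofReal_ne_zero]
  positivity

section z

variable {z : ℂ} (hz : ¬(z.im = 0 ∧ z.re ≤ -1))

include hz

lemma slit {s : ℝ} (h1 : 1 ≤ s) : (s : ℂ) + z ∈ slitPlane := by
  rw [Complex.mem_slitPlane_iff]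
  by_cases him : z.im = 0
  · left
    have : -1 < z.re := by
      push_neg at hz
      exact hz him
    simp only [Complex.add_re, Complex.ofReal_re]
    linarith
  · right
    simpa using him

lemma ne0 {s : ℝ} (h1 : 1 ≤ s) : (s : ℂ) + z ≠ 0 :=
  Complex.slitPlane_ne_zero (slit hz h1)

lemma ne0' {s : ℝ} (h1 : 1 ≤ s) : -(s : ℂ) - z ≠ 0 := by
  have : -(s : ℂ) - z = -((s : ℂ) + z) := by ring
  rw [this, neg_ne_zero]
  exact ne0 hz h1

lemma hcont : ContinuousOn (h z) (Ici 1) := by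
  unfold h
  apply ContinuousOn.mul
  · apply ContinuousOn.add
    · apply ContinuousOn.inv₀
      · fun_prop
      · intro s hs; exact ne0' hz hs
    · apply ContinuousOn.div
      · fun_prop
      · fun_prop
      · intro s _; exact sq_add_one_ne s
  · apply ContinuousOn.inv₀
    · fun_prop
    · intro s hs
      simpa using (by linarith [mem_Ici.mp hs] : s ≠ 0)

lemma hint : IntegrableOn (h z) (Ioi 1) := by
  set R : ℝ := max 1 (2 * ‖z‖) with hR
  have hR1 : (1 : ℝ) ≤ R := le_max_left _ _
  have hR0 : (0 : ℝ) < R := lt_of_lt_of_le one_pos hR1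
  rw [← Ioc_union_Ioi_eq_Ioi hR1]
  refine IntegrableOn.union ?_ ?_
  · exact (((hcont hz).mono (Icc_subset_Ici_self)).integrableOn_Icc).mono_set
      Ioc_subset_Icc_self
  · have hbase : IntegrableOn (fun s : ℝ => 3 * s ^ (-2 : ℝ)) (Ioi R) :=
      (integrableOn_Ioi_rpow_of_lt (by norm_num) hR0).const_mul 3
    refine hbase.integrable.mono' ?_ ?_
    · exact ((hcont hz).mono (fun s hs => le_of_lt (lt_of_le_of_lt hR1 hs))).aestronglyMeasurable
        measurableSet_Ioi
    · refine (ae_restrict_iff' measurableSet_Ioi).mpr (ae_of_all _ fun s hs => ?_)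
      have hsR : R < s := hs
      have hs1 : 1 < s := lt_of_le_of_lt hR1 hsR
      have hs0 : 0 < s := lt_trans one_pos hs1
      have habs : ‖z‖ ≤ s / 2 := by
        have : 2 * ‖z‖ ≤ R := le_max_right _ _
        linarith
      have hA : ‖(-(s : ℂ) - z)‖ ≥ s / 2 := by
        have h1 : ‖(-(s : ℂ) - z)‖ = ‖((s : ℂ) + z)‖ := by
          have : -(s : ℂ) - z = -((s : ℂ) + z) := by ring
          rw [this, norm_neg]
        have h2 : ‖((s : ℂ))‖ - ‖z‖ ≤ ‖((s : ℂ) + z)‖ := by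
          have := norm_sub_norm_le ((s : ℂ)) (-z)
          simpa [sub_neg_eq_add] using this
        have h3 : ‖((s : ℂ))‖ = s := by
          rw [Complex.norm_real, Real.norm_eq_abs]; exact abs_of_pos hs0
        rw [h1]
        rw [h3] at h2
        linarith
      have hAnorm : ‖(-(s : ℂ) - z)⁻¹‖ ≤ 2 / s := by
        rw [norm_inv]
        rw [div_eq_mul_inv]
        have hApos : (0:ℝ) < s / 2 := by linarith
        have := inv_anti₀ hApos hA
        calc (‖(-(s : ℂ) - z)‖)⁻¹ ≤ (s / 2)⁻¹ := this
          _ = 2 * s⁻¹ := by rw [inv_div]; ring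
      have hBnorm : ‖(s : ℂ) / ((s : ℂ) ^ 2 + 1)‖ ≤ 1 / s := by
        have he : (s : ℂ) / ((s : ℂ) ^ 2 + 1) = ((s / (s ^ 2 + 1) : ℝ) : ℂ) := by
          push_cast; ring
        rw [he, Complex.norm_real, Real.norm_eq_abs]
        rw [abs_of_pos (by positivity)]
        rw [div_le_div_iff₀ (by positivity) hs0]
        nlinarith
      have hs_norm : ‖((s : ℂ))⁻¹‖ = s⁻¹ := by
        rw [norm_inv, Complex.norm_real, Real.norm_eq_abs, abs_of_pos hs0]
      calc ‖h z s‖ ≤ (‖(-(s : ℂ) - z)⁻¹‖ + ‖(s : ℂ) / ((s : ℂ) ^ 2 + 1)‖) * ‖((s : ℂ))⁻¹‖ := by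
            rw [h, norm_mul]
            gcongr
            exact norm_add_le _ _
        _ ≤ (2 / s + 1 / s) * s⁻¹ := by
            rw [hs_norm]; gcongr
        _ = 3 * (s ^ 2)⁻¹ := by field_simp; ring
        _ = 3 * s ^ (-2 : ℝ) := by
            rw [Real.rpow_neg hs0.le]
            norm_num [Real.rpow_two]

noncomputable def H (z : ℂ) (s : ℝ) : ℂ :=
  z⁻¹ * (Complex.log ((s : ℂ) + z) - ((Real.log s : ℝ) : ℂ)) + ((Real.arctan s : ℝ) : ℂ)

lemma hderiv (hz0 : z ≠ 0) : ∀ s ∈ Ici (1 : ℝ), HasDerivAt (H z) (h z s) s := by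
  intro s hs
  have hs1 : (1 : ℝ) ≤ s := hs
  have hs0 : (0 : ℝ) < s := lt_of_lt_of_le one_pos hs1
  have hsC : (s : ℂ) ≠ 0 := by exact_mod_cast hs0.ne'
  have d1 : HasDerivAt (fun x : ℝ => Complex.log ((x : ℂ) + z)) (((s : ℂ) + z)⁻¹) s := by
    have dlog : HasDerivAt (fun w : ℂ => Complex.log (w + z)) (((s : ℂ) + z)⁻¹) ((s : ℂ)) := by
      simpa [Function.comp_def] using (Complex.hasDerivAt_log (slit hz hs1)).comp ((s : ℂ))
        ((hasDerivAt_id ((s : ℂ))).add_const z)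
    exact dlog.comp_ofReal
  have d2 : HasDerivAt (fun x : ℝ => ((Real.log x : ℝ) : ℂ)) (((s⁻¹ : ℝ) : ℝ) : ℂ) s :=
    (Real.hasDerivAt_log hs0.ne').ofReal_comp
  have d3 : HasDerivAt (fun x : ℝ => ((Real.arctan x : ℝ) : ℂ)) ((((1 + s ^ 2)⁻¹ : ℝ) : ℝ) : ℂ) s :=
    (Real.hasDerivAt_arctan' s).ofReal_comp
  have total := ((d1.sub d2).const_mul (z⁻¹)).add d3
  refine total.congr_deriv ?_
  symm
  unfold h
  have h1 : (s : ℂ) + z ≠ 0 := ne0 hz hs1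
  have h2 : ((s : ℂ)) ^ 2 + 1 ≠ 0 := sq_add_one_ne s
  have h3 : -(s : ℂ) - z ≠ 0 := ne0' hz hs1
  have h4 : (1 : ℂ) + (s : ℂ) ^ 2 ≠ 0 := by
    have := sq_add_one_ne s
    rwa [add_comm] at this
  push_cast
  field_simp
  ring

lemma htendsto (hz0 : z ≠ 0) : Filter.Tendsto (H z) Filter.atTop (nhds ((Real.pi / 2 : ℝ) : ℂ)) := by
  have t0 : Filter.Tendsto (fun s : ℝ => ((s : ℂ))⁻¹) Filter.atTop (nhds 0) := by
    have := tendsto_inv_atTop_zero (𝕜 := ℝ)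
    have h2 := (Complex.continuous_ofReal.tendsto 0).comp this
    simpa [Function.comp_def] using h2
  have t1 : Filter.Tendsto (fun s : ℝ => 1 + z * ((s : ℂ))⁻¹) Filter.atTop (nhds 1) := by
    have := (t0.const_mul z)
    simpa using Filter.Tendsto.const_add 1 this
  have t2 : Filter.Tendsto (fun s : ℝ => Complex.log (1 + z * ((s : ℂ))⁻¹))
      Filter.atTop (nhds 0) := by
    have hc : ContinuousAt Complex.log 1 :=
      (Complex.differentiableAt_log (by simp [Complex.mem_slitPlane_iff])).continuousAt
    have := hc.tendsto.comp t1
    simpa [Function.comp_def] using this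
  have t3 : Filter.Tendsto (fun s : ℝ => ((Real.arctan s : ℝ) : ℂ)) Filter.atTop
      (nhds ((Real.pi / 2 : ℝ) : ℂ)) :=
    (Complex.continuous_ofReal.tendsto _).comp
      (tendsto_nhds_of_tendsto_nhdsWithin Real.tendsto_arctan_atTop)
  have t4 : Filter.Tendsto (fun s : ℝ => z⁻¹ * Complex.log (1 + z * ((s : ℂ))⁻¹)
      + ((Real.arctan s : ℝ) : ℂ)) Filter.atTop (nhds ((Real.pi / 2 : ℝ) : ℂ)) := by
    have := (t2.const_mul (z⁻¹)).add t3
    simpa using this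
  refine t4.congr' ?_
  filter_upwards [Filter.eventually_ge_atTop (max 1 (‖z‖ + 1))] with s hs
  have hs1 : (1 : ℝ) ≤ s := le_trans (le_max_left _ _) hs
  have hs0 : (0 : ℝ) < s := lt_of_lt_of_le one_pos hs1
  have hsC : (s : ℂ) ≠ 0 := by exact_mod_cast hs0.ne'
  have hfac : (s : ℂ) + z = (s : ℂ) * (1 + z * ((s : ℂ))⁻¹) := by
    push_cast
    field_simp
  have hne : 1 + z * ((s : ℂ))⁻¹ ≠ 0 := by
    intro hcon
    have : (s : ℂ) + z = 0 := by rw [hfac, hcon, mul_zero]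
    exact ne0 hz hs1 this
  have hlog : Complex.log ((s : ℂ) + z)
      = ((Real.log s : ℝ) : ℂ) + Complex.log (1 + z * ((s : ℂ))⁻¹) := by
    rw [hfac, Complex.log_ofReal_mul hs0 hne]
  unfold H
  rw [hlog]
  ring

lemma key (hz0 : z ≠ 0) :
    ∫ s in Ioi (1 : ℝ), h z s
      = ((Real.pi / 4 : ℝ) : ℂ) - Complex.log (1 + z) / z := by
  have := integral_Ioi_of_hasDerivAt_of_tendsto' (hderiv hz hz0) (hint hz) (htendsto hz hz0)
  rw [this]
  unfold H
  simp only [Complex.ofReal_one, Real.log_one, Real.arctan_one]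
  push_cast
  field_simp
  ring

noncomputable def H0 (s : ℝ) : ℝ := s⁻¹ + Real.arctan s

omit hz in
lemma key0 : ∫ s in Ioi (1 : ℝ), h 0 s = ((Real.pi / 4 : ℝ) : ℂ) - 1 := by
  have hderiv0 : ∀ s ∈ Ici (1 : ℝ), HasDerivAt (fun s : ℝ => ((H0 s : ℝ) : ℂ)) (h 0 s) s := by
    intro s hs
    have hs1 : (1 : ℝ) ≤ s := hs
    have hs0 : (0 : ℝ) < s := lt_of_lt_of_le one_pos hs1
    have hsC : (s : ℂ) ≠ 0 := by exact_mod_cast hs0.ne'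
    have d := ((hasDerivAt_inv hs0.ne').add (Real.hasDerivAt_arctan' s)).ofReal_comp
    refine d.congr_deriv ?_
    symm
    have e : h 0 s = ((((-s)⁻¹ + s / (s ^ 2 + 1)) * s⁻¹ : ℝ) : ℂ) := by
      unfold h; push_cast; ring
    rw [e, Complex.ofReal_inj, inv_neg]
    have h6 : s ≠ 0 := hs0.ne'
    have e1 : s / (s ^ 2 + 1) * s⁻¹ = (1 + s ^ 2)⁻¹ := by
      rw [div_mul_eq_mul_div, mul_inv_cancel₀ h6, one_div, add_comm]
    have e2 : s⁻¹ * s⁻¹ = (s ^ 2)⁻¹ := by rw [← mul_inv, ← sq]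
    calc (-s⁻¹ + s / (s ^ 2 + 1)) * s⁻¹ = -(s⁻¹ * s⁻¹) + s / (s ^ 2 + 1) * s⁻¹ := by ring
      _ = -(s ^ 2)⁻¹ + (1 + s ^ 2)⁻¹ := by rw [e1, e2]
  have htend0 : Filter.Tendsto (fun s : ℝ => ((H0 s : ℝ) : ℂ)) Filter.atTop
      (nhds ((Real.pi / 2 : ℝ) : ℂ)) := by
    have treal : Filter.Tendsto H0 Filter.atTop (nhds (Real.pi / 2)) := by
      have := tendsto_inv_atTop_zero.add
        (tendsto_nhds_of_tendsto_nhdsWithin Real.tendsto_arctan_atTop)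
      rw [show H0 = fun x => x⁻¹ + Real.arctan x from rfl]
      simpa using this
    exact (Complex.continuous_ofReal.tendsto _).comp treal
  have hz' : ¬((0 : ℂ).im = 0 ∧ (0 : ℂ).re ≤ -1) := by norm_num
  have := integral_Ioi_of_hasDerivAt_of_tendsto' hderiv0 (hint hz') htend0
  rw [this]
  unfold H0
  simp only [inv_one, Real.arctan_one]
  push_cast
  ring

omit hz in
lemma iio_eq : ∫ t in Iio (-1 : ℝ), g z t = ∫ s in Ioi (1 : ℝ), h z s := by
  have h1 : ∫ t in Iio (-1 : ℝ), g z t = ∫ t in Iic (-1 : ℝ), g z t :=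
    (integral_Iic_eq_integral_Iio).symm
  rw [h1, ← integral_comp_neg_Ioi]
  exact setIntegral_congr_fun measurableSet_Ioi fun s _ => g_neg z s


omit hz in
lemma integral_g (hz : ¬(z.im = 0 ∧ z.re ≤ -1)) :
    ∫ t in Iio (-1 : ℝ), g z t
      = ((Real.pi / 4 : ℝ) : ℂ) + (if z = 0 then (-1 : ℂ) else -Complex.log (1 + z) / z) := by
  rw [iio_eq]
  by_cases hz0 : z = 0
  · subst hz0
    rw [key0, if_pos rfl]
    ring
  · rw [key hz hz0, if_neg hz0]
    ring


end z

end NegLogNP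

/-- The function `-log(1+z)/z` (with value `-1` at `0`) is a Nevanlinna–Pick function
and admits an explicit integral representation on `ℂ \ (-∞, -1]`. -/
theorem neg_log_one_add_div_nevanlinna_pick
    (f : ℂ → ℂ) (hf : ∀ z : ℂ, f z = if z = 0 then -1 else -Complex.log (1 + z) / z) :
    (∀ z : ℂ, ¬(z.im = 0 ∧ z.re ≤ -1) →
      f z = -(Real.pi / 4 : ℝ) + ∫ t in Set.Iio (-1 : ℝ),
        ((((t : ℂ) - z)⁻¹ - (t : ℂ) / ((t : ℂ) ^ 2 + 1)) * (-(t : ℂ))⁻¹)) ∧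
    DifferentiableOn ℂ f {z : ℂ | 0 < z.im} ∧
    (∀ z : ℂ, 0 < z.im → 0 ≤ (f z).im) := by
  have part1 : ∀ z : ℂ, ¬(z.im = 0 ∧ z.re ≤ -1) →
      f z = -(Real.pi / 4 : ℝ) + ∫ t in Set.Iio (-1 : ℝ),
        ((((t : ℂ) - z)⁻¹ - (t : ℂ) / ((t : ℂ) ^ 2 + 1)) * (-(t : ℂ))⁻¹) := by
    intro z hz
    have e : (∫ t in Set.Iio (-1 : ℝ),
        ((((t : ℂ) - z)⁻¹ - (t : ℂ) / ((t : ℂ) ^ 2 + 1)) * (-(t : ℂ))⁻¹))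
        = ∫ t in Set.Iio (-1 : ℝ), NegLogNP.g z t := rfl
    rw [e, NegLogNP.integral_g hz, hf z]
    push_cast
    ring
  refine ⟨part1, ?_, ?_⟩
  · have hd : DifferentiableOn ℂ (fun z => -Complex.log (1 + z) / z) {z : ℂ | 0 < z.im} := by
      intro w hw
      have hw0 : w ≠ 0 := by
        intro h; rw [h] at hw; simp at hw
      have h1 : (1 + w) ∈ Complex.slitPlane := by
        rw [Complex.mem_slitPlane_iff]; right
        simp only [Complex.add_im, Complex.one_im, zero_add]
        exact ne_of_gt hw
      have : DifferentiableAt ℂ (fun z => -Complex.log (1 + z) / z) w :=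
        (((Complex.differentiableAt_log h1).comp w
          ((differentiableAt_const (1 : ℂ)).add differentiableAt_id)).neg).div
          differentiableAt_id hw0
      exact this.differentiableWithinAt
    refine hd.congr fun x hx => ?_
    have hx0 : x ≠ 0 := by
      intro h; rw [h] at hx; simp at hx
    rw [hf x, if_neg hx0]
  · intro z hz0
    have hz : ¬(z.im = 0 ∧ z.re ≤ -1) := by
      intro hcon; rw [hcon.1] at hz0; exact lt_irrefl 0 hz0
    rw [part1 z hz]
    have e : (∫ t in Set.Iio (-1 : ℝ),
        ((((t : ℂ) - z)⁻¹ - (t : ℂ) / ((t : ℂ) ^ 2 + 1)) * (-(t : ℂ))⁻¹))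
        = ∫ s in Set.Ioi (1 : ℝ), NegLogNP.h z s := NegLogNP.iio_eq
    rw [e, Complex.add_im]
    have him0 : ((-(Real.pi / 4 : ℝ) : ℂ)).im = 0 := by
      norm_num
    rw [him0, zero_add]
    have hswap := integral_im (μ := volume.restrict (Set.Ioi (1 : ℝ))) (NegLogNP.hint hz)
    simp only [RCLike.im_to_complex] at hswap
    rw [← hswap]
    apply setIntegral_nonneg measurableSet_Ioi
    intro s hs
    have hs1 : (1 : ℝ) < s := hs
    have hs0 : (0 : ℝ) < s := lt_trans one_pos hs1
    have e2 : NegLogNP.h z s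
        = ((s⁻¹ : ℝ) : ℂ) * (-(s : ℂ) - z)⁻¹ + ((s / (s ^ 2 + 1) * s⁻¹ : ℝ) : ℂ) := by
      unfold NegLogNP.h; push_cast; ring
    rw [e2, Complex.add_im, Complex.ofReal_im, Complex.im_ofReal_mul]
    have him : ((-(s : ℂ) - z)⁻¹).im = z.im / Complex.normSq (-(s : ℂ) - z) := by
      rw [Complex.inv_im]
      simp [neg_div]
    rw [him]
    have : 0 ≤ s⁻¹ * (z.im / Complex.normSq (-(s : ℂ) - z)) :=
      mul_nonneg (inv_nonneg.mpr hs0.le) (div_nonneg hz0.le (Complex.normSq_nonneg _))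
    linarith
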